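/- (Dadarlat–Guentner criterion, sufficiency direction) Let A be a metric space such that for every ε > 0 and R > 0 there is a map ζ : A → S(ℓ₂) (the unit sphere of Hilbert space) with: (i) d(x,y) ≤ R implies ‖ζ(x) − ζ(y)‖ ≤ ε, and (ii) lim_{t→∞} inf{‖ζ(x)−ζ(y)‖ : d(x,y) ≥ t} = √2. Then A admits a coarse embedding into ℓ₂. -/
import Mathlib

set_option maxHeartbeats 1000000


/-- The separable Hilbert space `ℓ₂`. -/
noncomputable abbrev ellTwo : Type := lp (fun _ : ℕ => ℝ) 2

private lemma rpow_two_eq (x : ℝ) : x ^ (2 : ℝ) = x ^ 2 := by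
  rw [show (2 : ℝ) = ((2 : ℕ) : ℝ) by norm_num, Real.rpow_natCast]

private lemma ellTwo_hasSum (v : ellTwo) :
    HasSum (fun m : ℕ => ‖(v : ∀ _ : ℕ, ℝ) m‖ ^ (2 : ℝ)) (‖v‖ ^ (2 : ℝ)) := by
  have h := lp.hasSum_norm (E := fun _ : ℕ => ℝ) (p := 2) (by norm_num) v
  simpa using h

/-- The pairing equivalence used to pack a sequence of `ℓ₂` vectors into one. -/
noncomputable def packEquiv : ℕ ≃ ℕ × ℕ := (Denumerable.eqv (ℕ × ℕ)).symm

private lemma pack_spec (v : ℕ → ellTwo) (hv : Summable fun n => ‖v n‖ ^ (2 : ℝ)) :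
    Memℓp (fun k : ℕ => (v (packEquiv k).1 : ∀ _ : ℕ, ℝ) (packEquiv k).2) (2 : ENNReal) ∧
    ∑' k : ℕ, ‖(v (packEquiv k).1 : ∀ _ : ℕ, ℝ) (packEquiv k).2‖ ^ (2 : ℝ)
      = ∑' n : ℕ, ‖v n‖ ^ (2 : ℝ) := by
  set w : ℕ × ℕ → ℝ := fun p => ‖(v p.1 : ∀ _ : ℕ, ℝ) p.2‖ ^ (2 : ℝ) with hw_def
  have hw_nonneg : ∀ p, 0 ≤ w p := fun p => Real.rpow_nonneg (norm_nonneg _) _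
  have hrow : ∀ n : ℕ, HasSum (fun m => w (n, m)) (‖v n‖ ^ (2 : ℝ)) := fun n =>
    ellTwo_hasSum (v n)
  have hw : Summable w := by
    rw [summable_prod_of_nonneg hw_nonneg]
    refine ⟨fun n => (hrow n).summable, ?_⟩
    have : (fun n : ℕ => ∑' m, w (n, m)) = fun n => ‖v n‖ ^ (2 : ℝ) := by
      funext n; exact (hrow n).tsum_eq
    rw [this]; exact hv
  have hsum : Summable fun k : ℕ => w (packEquiv k) := packEquiv.summable_iff.2 hw
  have htsum : ∑' k : ℕ, w (packEquiv k) = ∑' n : ℕ, ‖v n‖ ^ (2 : ℝ) := by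
    rw [packEquiv.tsum_eq w, Summable.tsum_prod' hw fun n => (hrow n).summable]
    exact tsum_congr fun n => (hrow n).tsum_eq
  refine ⟨?_, htsum⟩
  apply memℓp_gen
  have : (fun k : ℕ => ‖(v (packEquiv k).1 : ∀ _ : ℕ, ℝ) (packEquiv k).2‖ ^
      (2 : ENNReal).toReal) = fun k : ℕ => w (packEquiv k) := by
    funext k; simp [hw_def]
  rw [this]; exact hsum

/-- Dadarlat–Guentner criterion (sufficiency): if for every `ε > 0` and `R > 0` there
is a map `ζ : A → S(ℓ₂)` such that `d(x,y) ≤ R ⟹ ‖ζ(x) − ζ(y)‖ ≤ ε` and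
`lim_{t→∞} inf{‖ζ(x) − ζ(y)‖ : d(x,y) ≥ t} = √2`, then `A` coarsely embeds into
`ℓ₂`. -/
theorem coarseEmbedding_of_dadarlat_guentner {A : Type*} [MetricSpace A]
    (h : ∀ ε : ℝ, 0 < ε → ∀ R : ℝ, 0 < R → ∃ ζ : A → ellTwo,
      (∀ x : A, ‖ζ x‖ = 1) ∧
      (∀ x y : A, dist x y ≤ R → ‖ζ x - ζ y‖ ≤ ε) ∧
      Filter.Tendsto
        (fun t : ℝ => sInf {d : ℝ | ∃ x y : A, t ≤ dist x y ∧ d = ‖ζ x - ζ y‖})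
        Filter.atTop (nhds (Real.sqrt 2))) :
    ∃ F : A → ellTwo, ∃ ρ₁ ρ₂ : ℝ → ℝ,
      (∀ x y : A, ρ₁ (dist x y) ≤ ‖F x - F y‖ ∧ ‖F x - F y‖ ≤ ρ₂ (dist x y)) ∧
      Filter.Tendsto ρ₁ Filter.atTop Filter.atTop := by
  classical
  rcases isEmpty_or_nonempty A with hA | hA
  · exact ⟨fun x => isEmptyElim x, id, id, fun x => isEmptyElim x, Filter.tendsto_id⟩
  obtain ⟨x₀⟩ := hA
  -- Step 1: choose the maps ζ n
  have hζ : ∀ n : ℕ, ∃ ζ : A → ellTwo,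
      (∀ x : A, ‖ζ x‖ = 1) ∧
      (∀ x y : A, dist x y ≤ (n : ℝ) + 1 → ‖ζ x - ζ y‖ ≤ (1 / 2 : ℝ) ^ (n + 1)) ∧
      Filter.Tendsto
        (fun t : ℝ => sInf {d : ℝ | ∃ x y : A, t ≤ dist x y ∧ d = ‖ζ x - ζ y‖})
        Filter.atTop (nhds (Real.sqrt 2)) := by
    intro n
    exact h _ (by positivity) _ (by positivity)
  choose ζ hζ1 hζ2 hζ3 using hζ
  -- Step 2: thresholds T n
  have hT : ∀ n : ℕ, ∃ T : ℝ, ∀ x y : A, T ≤ dist x y → 1 ≤ ‖ζ n x - ζ n y‖ := by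
    intro n
    have h2 : (1 : ℝ) < Real.sqrt 2 := by
      rw [show (1 : ℝ) = Real.sqrt 1 by simp]
      exact Real.sqrt_lt_sqrt (by norm_num) (by norm_num)
    have hev := (hζ3 n).eventually (lt_mem_nhds h2)
    rw [Filter.eventually_atTop] at hev
    obtain ⟨t₀, ht₀⟩ := hev
    refine ⟨t₀, fun x y hxy => ?_⟩
    have hmem : ‖ζ n x - ζ n y‖ ∈
        {d : ℝ | ∃ x y : A, t₀ ≤ dist x y ∧ d = ‖ζ n x - ζ n y‖} := ⟨x, y, hxy, rfl⟩
    have hbdd : BddBelow {d : ℝ | ∃ x y : A, t₀ ≤ dist x y ∧ d = ‖ζ n x - ζ n y‖} := by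
      refine ⟨0, fun d hd => ?_⟩
      obtain ⟨a, b, _, rfl⟩ := hd
      exact norm_nonneg _
    exact le_trans (ht₀ t₀ le_rfl).le (csInf_le hbdd hmem)
  choose T hT using hT
  -- basic norm bound
  have hbound2 : ∀ (n : ℕ) (x y : A), ‖ζ n x - ζ n y‖ ≤ 2 := by
    intro n x y
    calc ‖ζ n x - ζ n y‖ ≤ ‖ζ n x‖ + ‖ζ n y‖ := norm_sub_le _ _
    _ = 2 := by rw [hζ1 n x, hζ1 n y]; norm_num
  -- Step 3: summability of the squares
  have hsum : ∀ x y : A, Summable fun n : ℕ => ‖ζ n x - ζ n y‖ ^ (2 : ℝ) := by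
    intro x y
    set N : ℕ := ⌈dist x y⌉₊ with hN
    rw [← (summable_nat_add_iff N)]
    refine Summable.of_nonneg_of_le (fun n => Real.rpow_nonneg (norm_nonneg _) _)
      (fun n => ?_) (summable_geometric_of_lt_one (by norm_num : (0:ℝ) ≤ 1/2) (by norm_num))
    have hd : dist x y ≤ ((n + N : ℕ) : ℝ) + 1 := by
      have h1 : dist x y ≤ (N : ℝ) := Nat.le_ceil _
      have h2 : (N : ℝ) ≤ ((n + N : ℕ) : ℝ) + 1 := by
        push_cast; linarith [Nat.cast_nonneg (α := ℝ) n]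
      linarith
    have hle : ‖ζ (n + N) x - ζ (n + N) y‖ ≤ (1 / 2 : ℝ) ^ (n + N + 1) := hζ2 _ x y hd
    rw [rpow_two_eq]
    have h1 : ‖ζ (n + N) x - ζ (n + N) y‖ ^ 2 ≤ ((1 / 2 : ℝ) ^ (n + N + 1)) ^ 2 := by
      have := norm_nonneg (ζ (n + N) x - ζ (n + N) y)
      nlinarith
    refine h1.trans ?_
    rw [← pow_mul]
    exact pow_le_pow_of_le_one (by norm_num) (by norm_num) (by omega)
  -- Step 4: the embedding F
  have hmem : ∀ x : A,
      Memℓp (fun k : ℕ => ((ζ (packEquiv k).1 x - ζ (packEquiv k).1 x₀ : ellTwo) :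
        ∀ _ : ℕ, ℝ) (packEquiv k).2) (2 : ENNReal) :=
    fun x => (pack_spec (fun n => ζ n x - ζ n x₀) (hsum x x₀)).1
  set F : A → ellTwo := fun x => ⟨_, hmem x⟩ with hF
  -- key norm identity
  have hkey : ∀ x y : A, ‖F x - F y‖ ^ 2 = ∑' n : ℕ, ‖ζ n x - ζ n y‖ ^ (2 : ℝ) := by
    intro x y
    have hcoe : ((F x - F y : ellTwo) : ∀ _ : ℕ, ℝ) = fun k : ℕ =>
        ((ζ (packEquiv k).1 x - ζ (packEquiv k).1 y : ellTwo) : ∀ _ : ℕ, ℝ)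
          (packEquiv k).2 := by
      funext k
      have h1 : ((F x - F y : ellTwo) : ∀ _ : ℕ, ℝ) k
          = (F x : ∀ _ : ℕ, ℝ) k - (F y : ∀ _ : ℕ, ℝ) k := by
        rw [lp.coeFn_sub]; rfl
      rw [h1]
      show ((ζ (packEquiv k).1 x - ζ (packEquiv k).1 x₀ : ellTwo) : ∀ _ : ℕ, ℝ)
            (packEquiv k).2
          - ((ζ (packEquiv k).1 y - ζ (packEquiv k).1 x₀ : ellTwo) : ∀ _ : ℕ, ℝ)
            (packEquiv k).2 = _
      simp only [lp.coeFn_sub, Pi.sub_apply]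
      ring
    have h2 := lp.norm_rpow_eq_tsum (E := fun _ : ℕ => ℝ) (p := 2) (by norm_num)
      (F x - F y)
    simp only [ENNReal.toReal_ofNat] at h2
    rw [← rpow_two_eq, h2]
    calc ∑' k : ℕ, ‖((F x - F y : ellTwo) : ∀ _ : ℕ, ℝ) k‖ ^ (2 : ℝ)
        = ∑' k : ℕ, ‖((ζ (packEquiv k).1 x - ζ (packEquiv k).1 y : ellTwo) :
            ∀ _ : ℕ, ℝ) (packEquiv k).2‖ ^ (2 : ℝ) := by rw [hcoe]
      _ = ∑' n : ℕ, ‖ζ n x - ζ n y‖ ^ (2 : ℝ) :=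
          (pack_spec (fun n => ζ n x - ζ n y) (hsum x y)).2
  -- the control functions
  set g : ℕ → ℝ := fun n => (n : ℝ) + |T n| with hg
  have hg_nonneg : ∀ n, 0 ≤ g n := fun n => by
    have := abs_nonneg (T n); have := Nat.cast_nonneg (α := ℝ) n; simp only [hg]; linarith
  set ρ₁ : ℝ → ℝ := fun t =>
    Real.sqrt (((Finset.range (⌊t⌋₊ + 1)).filter (fun n => g n ≤ t)).card) with hρ₁
  set ρ₂ : ℝ → ℝ := fun t => Real.sqrt (4 * t + 6) with hρ₂
  refine ⟨F, ρ₁, ρ₂, fun x y => ⟨?_, ?_⟩, ?_⟩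
  · -- lower bound
    set d : ℝ := dist x y with hd
    set s : Finset ℕ := (Finset.range (⌊d⌋₊ + 1)).filter (fun n => g n ≤ d) with hs
    have hterm : ∀ n ∈ s, (1 : ℝ) ≤ ‖ζ n x - ζ n y‖ ^ (2 : ℝ) := by
      intro n hn
      rw [hs, Finset.mem_filter] at hn
      have hTn : T n ≤ d := le_trans (le_trans (le_abs_self _)
        (by simp only [hg]; linarith [Nat.cast_nonneg (α := ℝ) n])) hn.2
      have h1 : (1 : ℝ) ≤ ‖ζ n x - ζ n y‖ := hT n x y hTn
      rw [rpow_two_eq]; nlinarith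
    have hcard : (s.card : ℝ) ≤ ∑' n : ℕ, ‖ζ n x - ζ n y‖ ^ (2 : ℝ) := by
      calc (s.card : ℝ) = ∑ n ∈ s, (1 : ℝ) := by simp
        _ ≤ ∑ n ∈ s, ‖ζ n x - ζ n y‖ ^ (2 : ℝ) := Finset.sum_le_sum hterm
        _ ≤ ∑' n : ℕ, ‖ζ n x - ζ n y‖ ^ (2 : ℝ) :=
            Summable.sum_le_tsum s (fun n _ => Real.rpow_nonneg (norm_nonneg _) _) (hsum x y)
    have h1 : (s.card : ℝ) ≤ ‖F x - F y‖ ^ 2 := by rw [hkey x y]; exact hcard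
    have : ρ₁ d = Real.sqrt (s.card : ℝ) := rfl
    rw [this]
    calc Real.sqrt (s.card : ℝ) ≤ Real.sqrt (‖F x - F y‖ ^ 2) := Real.sqrt_le_sqrt h1
      _ = ‖F x - F y‖ := Real.sqrt_sq (norm_nonneg _)
  · -- upper bound
    set d : ℝ := dist x y with hd
    set N : ℕ := ⌈d⌉₊ with hN
    have hsplit := Summable.sum_add_tsum_nat_add N (hsum x y)
    have hpart1 : ∑ i ∈ Finset.range N, ‖ζ i x - ζ i y‖ ^ (2 : ℝ) ≤ 4 * N := by
      calc ∑ i ∈ Finset.range N, ‖ζ i x - ζ i y‖ ^ (2 : ℝ)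
          ≤ ∑ _i ∈ Finset.range N, (4 : ℝ) := by
            refine Finset.sum_le_sum fun i _ => ?_
            rw [rpow_two_eq]
            have := hbound2 i x y
            have := norm_nonneg (ζ i x - ζ i y)
            nlinarith
        _ = 4 * N := by rw [Finset.sum_const, Finset.card_range, nsmul_eq_mul]; ring
    have hpart2 : ∑' n : ℕ, ‖ζ (n + N) x - ζ (n + N) y‖ ^ (2 : ℝ) ≤ 2 := by
      have hle : ∀ n : ℕ, ‖ζ (n + N) x - ζ (n + N) y‖ ^ (2 : ℝ) ≤ (1 / 2 : ℝ) ^ n := by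
        intro n
        have hdle : d ≤ ((n + N : ℕ) : ℝ) + 1 := by
          have h1 : d ≤ (N : ℝ) := Nat.le_ceil _
          have : (N : ℝ) ≤ ((n + N : ℕ) : ℝ) + 1 := by
            push_cast; linarith [Nat.cast_nonneg (α := ℝ) n]
          linarith
        have hle' : ‖ζ (n + N) x - ζ (n + N) y‖ ≤ (1 / 2 : ℝ) ^ (n + N + 1) :=
          hζ2 _ x y hdle
        rw [rpow_two_eq]
        have h1 : ‖ζ (n + N) x - ζ (n + N) y‖ ^ 2 ≤ ((1 / 2 : ℝ) ^ (n + N + 1)) ^ 2 := by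
          have := norm_nonneg (ζ (n + N) x - ζ (n + N) y)
          nlinarith
        refine h1.trans ?_
        rw [← pow_mul]
        exact pow_le_pow_of_le_one (by norm_num) (by norm_num) (by omega)
      calc ∑' n : ℕ, ‖ζ (n + N) x - ζ (n + N) y‖ ^ (2 : ℝ)
          ≤ ∑' n : ℕ, (1 / 2 : ℝ) ^ n := by
            refine Summable.tsum_le_tsum hle ((summable_nat_add_iff N).2 (hsum x y)) ?_
            exact summable_geometric_of_lt_one (by norm_num) (by norm_num)
        _ = 2 := by rw [tsum_geometric_of_lt_one (by norm_num) (by norm_num)]; norm_num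
    have hNd : (N : ℝ) ≤ d + 1 := by
      have : (N : ℝ) < d + 1 := Nat.ceil_lt_add_one dist_nonneg
      linarith
    have hS : ‖F x - F y‖ ^ 2 ≤ 4 * d + 6 := by
      rw [hkey x y, ← hsplit]
      have := Finset.sum_nonneg (fun i (_ : i ∈ Finset.range N) =>
        Real.rpow_nonneg (norm_nonneg (ζ i x - ζ i y)) (2 : ℝ))
      nlinarith
    calc ‖F x - F y‖ = Real.sqrt (‖F x - F y‖ ^ 2) := (Real.sqrt_sq (norm_nonneg _)).symm
      _ ≤ Real.sqrt (4 * d + 6) := Real.sqrt_le_sqrt hS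
  · -- tendsto
    rw [Filter.tendsto_atTop]
    intro b
    set M : ℕ := ⌈b ^ 2⌉₊ with hM
    set t₀ : ℝ := (M : ℝ) + ∑ n ∈ Finset.range M, g n with ht₀
    rw [Filter.eventually_atTop]
    refine ⟨max t₀ 0, fun t ht => ?_⟩
    have ht0 : (0 : ℝ) ≤ t := le_trans (le_max_right _ _) ht
    have htt₀ : t₀ ≤ t := le_trans (le_max_left _ _) ht
    have hsum_nonneg : (0 : ℝ) ≤ ∑ n ∈ Finset.range M, g n :=
      Finset.sum_nonneg fun n _ => hg_nonneg n
    have hMt : (M : ℝ) ≤ t := by simp only [ht₀] at htt₀; linarith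
    have hsubset : Finset.range M ⊆ (Finset.range (⌊t⌋₊ + 1)).filter (fun n => g n ≤ t) := by
      intro n hn
      rw [Finset.mem_range] at hn
      rw [Finset.mem_filter, Finset.mem_range]
      constructor
      · have : M ≤ ⌊t⌋₊ := Nat.le_floor hMt
        omega
      · have h1 : g n ≤ ∑ m ∈ Finset.range M, g m :=
          Finset.single_le_sum (fun m _ => hg_nonneg m) (Finset.mem_range.2 hn)
        have : (0 : ℝ) ≤ (M : ℝ) := Nat.cast_nonneg _
        simp only [ht₀] at htt₀
        linarith
    have hcard : (M : ℝ) ≤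
        (((Finset.range (⌊t⌋₊ + 1)).filter (fun n => g n ≤ t)).card : ℝ) := by
      have := Finset.card_le_card hsubset
      rw [Finset.card_range] at this
      exact_mod_cast this
    have h1 : b ≤ Real.sqrt (M : ℝ) := by
      have h2 : b ^ 2 ≤ (M : ℝ) := Nat.le_ceil _
      refine le_trans (le_abs_self b) ?_
      rw [← Real.sqrt_sq_eq_abs]
      exact Real.sqrt_le_sqrt h2
    exact le_trans h1 (Real.sqrt_le_sqrt hcard)
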